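/- Let n ∈ {5, 6}. There is no n×n additive-multiplicative magic square of distinct positive integers whose magic product P has the form P = p^s·q^m, where p and q are distinct primes, s is a positive integer, and m is an integer with 0 ≤ m ≤ 3. (The case m = 0 says the magic product cannot be a prime power p^s.) -/

import Mathlib

lemma aux_fact_p {p q : ℕ} (hp : p.Prime) (hq : q.Prime) (hpq : p ≠ q) (x y : ℕ) :
    (p ^ x * q ^ y).factorization p = x := by
  rw [Nat.factorization_mul (pow_ne_zero _ hp.ne_zero) (pow_ne_zero _ hq.ne_zero)]
  simp [hp.factorization_pow, hq.factorization_pow, Finsupp.single_apply, Ne.symm hpq]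

lemma aux_fact_q {p q : ℕ} (hp : p.Prime) (hq : q.Prime) (hpq : p ≠ q) (x y : ℕ) :
    (p ^ x * q ^ y).factorization q = y := by
  rw [mul_comm]; exact aux_fact_p hq hp (Ne.symm hpq) y x

lemma entry_form {p q : ℕ} (hp : p.Prime) (hq : q.Prime) (hpq : p ≠ q) {d s m : ℕ}
    (hd : d ∣ p ^ s * q ^ m) :
    d = p ^ d.factorization p * q ^ d.factorization q := by
  obtain ⟨d1, d2, h1, h2, rfl⟩ := exists_dvd_and_dvd_of_dvd_mul hd
  obtain ⟨α, -, rfl⟩ := (Nat.dvd_prime_pow hp).mp h1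
  obtain ⟨β, -, rfl⟩ := (Nat.dvd_prime_pow hq).mp h2
  rw [aux_fact_p hp hq hpq, aux_fact_q hp hq hpq]

lemma pair_le {n : ℕ} (f : Fin n → ℕ) {j j' : Fin n} (h : j ≠ j') :
    f j + f j' ≤ ∑ x, f x := by
  classical
  have := Finset.sum_le_sum_of_subset (f := f) (Finset.subset_univ {j, j'})
  simpa [Finset.sum_pair h] using this

lemma fact_prod_apply {n : ℕ} (f : Fin n → ℕ) (hf : ∀ i, f i ≠ 0) (q : ℕ) :
    (∏ i, f i).factorization q = ∑ i, (f i).factorization q := by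
  rw [Nat.factorization_prod (fun i _ => hf i)]
  simp [Finsupp.finset_sum_apply]

lemma row_key {n p q : ℕ} (hp : p.Prime) (hq : q.Prime) (hpq : p ≠ q)
    {A : Fin n → Fin n → ℕ} {S a0 : ℕ}
    (hent : ∀ i j, A i j = p ^ (A i j).factorization p * q ^ (A i j).factorization q)
    (hmin : ∀ i j, a0 ≤ (A i j).factorization p)
    (hrow : ∀ i, ∑ j, A i j = S)
    (hS : p ^ (a0 + 1) ∣ S)
    {i j : Fin n} (hj : (A i j).factorization p = a0) :
    ∃ j', j' ≠ j ∧ (A i j').factorization p = a0 := by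
  classical
  by_contra hcon
  push_neg at hcon
  have hfil : Finset.univ.filter (fun j' => (A i j').factorization p = a0) = {j} := by
    ext j'
    simp only [Finset.mem_filter, Finset.mem_univ, true_and, Finset.mem_singleton]
    constructor
    · intro h
      by_contra hne
      exact hcon j' hne h
    · rintro rfl; exact hj
  have split := Finset.sum_filter_add_sum_filter_not Finset.univ
    (fun j' => (A i j').factorization p = a0) (fun j' => A i j')
  rw [hfil, Finset.sum_singleton, hrow i] at split
  have hY : p ^ (a0 + 1) ∣ ∑ j' ∈ Finset.univ.filter
      (fun j' => ¬ (A i j').factorization p = a0), A i j' := by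
    apply Finset.dvd_sum
    intro x hx
    have hx' : (A i x).factorization p ≠ a0 := (Finset.mem_filter.mp hx).2
    have h1 : a0 + 1 ≤ (A i x).factorization p :=
      lt_of_le_of_ne (hmin i x) (Ne.symm hx')
    calc p ^ (a0 + 1) ∣ p ^ ((A i x).factorization p) := pow_dvd_pow p h1
      _ ∣ A i x := by
          conv_rhs => rw [hent i x]
          exact dvd_mul_right _ _
  have hAij : p ^ (a0 + 1) ∣ A i j := by
    rw [add_comm] at split
    exact (Nat.dvd_add_right hY).mp (split ▸ hS)
  rw [hent i j, hj, pow_succ] at hAij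
  have hpq' : p ∣ q ^ (A i j).factorization q :=
    (mul_dvd_mul_iff_left (pow_ne_zero a0 hp.ne_zero)).mp hAij
  exact hpq ((Nat.prime_dvd_prime_iff_eq hp hq).mp (hp.dvd_of_dvd_pow hpq'))

/-- `A` is an `n × n` additive-multiplicative magic square of pairwise distinct
positive integers, with magic sum `S` and magic product `P`: every row, every
column, and both long diagonals have sum `S` and product `P`. -/
def IsAddMulMagicSquare (n : ℕ) (A : Fin n → Fin n → ℕ) (S P : ℕ) : Prop :=
  (∀ i j, 0 < A i j) ∧
  (Function.Injective fun c : Fin n × Fin n => A c.1 c.2) ∧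
  (∀ i, ∑ j, A i j = S) ∧
  (∀ j, ∑ i, A i j = S) ∧
  (∑ i, A i i = S) ∧
  (∑ i, A i i.rev = S) ∧
  (∀ i, ∏ j, A i j = P) ∧
  (∀ j, ∏ i, A i j = P) ∧
  (∏ i, A i i = P) ∧
  (∏ i, A i i.rev = P)

/-- No 5×5 or 6×6 additive-multiplicative magic square of distinct positive
integers has a magic product of the form `p^s * q^m` with `p ≠ q` primes,
`s ≥ 1` and `0 ≤ m ≤ 3`. -/
theorem no_magic_square_with_product_p_pow_q_cube
    (n : ℕ) (hn : n = 5 ∨ n = 6) :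
    ¬ ∃ (A : Fin n → Fin n → ℕ) (S P : ℕ) (p q s m : ℕ),
      IsAddMulMagicSquare n A S P ∧ p.Prime ∧ q.Prime ∧ p ≠ q ∧
      1 ≤ s ∧ m ≤ 3 ∧ P = p ^ s * q ^ m := by
  classical
  rintro ⟨A, S, P, p, q, s, m,
    ⟨hpos, hinj, hrow, hcol, -, -, hrowP, hcolP, -, -⟩, hp, hq, hpq, hs, hm, hP⟩
  have hn5 : 5 ≤ n := by rcases hn with rfl | rfl <;> norm_num
  have hA0 : ∀ i j, A i j ≠ 0 := fun i j => (hpos i j).ne'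
  have hent : ∀ i j, A i j = p ^ (A i j).factorization p * q ^ (A i j).factorization q := by
    intro i j
    apply entry_form hp hq hpq (s := s) (m := m)
    rw [← hP, ← hrowP i]
    exact Finset.dvd_prod_of_mem _ (Finset.mem_univ j)
  have hbrow : ∀ i, ∑ j, (A i j).factorization q = m := by
    intro i
    rw [← fact_prod_apply _ (hA0 i), hrowP i, hP, aux_fact_q hp hq hpq]
  have hbcol : ∀ j, ∑ i, (A i j).factorization q = m := by
    intro j
    rw [← fact_prod_apply _ (fun i => hA0 i j), hcolP j, hP, aux_fact_q hp hq hpq]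
  -- cell equality
  have hcell : ∀ i j i' j', (A i j).factorization p = (A i' j').factorization p →
      (A i j).factorization q = (A i' j').factorization q → i = i' ∧ j = j' := by
    intro i j i' j' h1 h2
    have hv : A i j = A i' j' := by rw [hent i j, hent i' j', h1, h2]
    have := hinj (a₁ := (i, j)) (a₂ := (i', j')) hv
    exact ⟨congrArg Prod.fst this, congrArg Prod.snd this⟩
  -- minimum p-valuation
  have hne : (Finset.univ : Finset (Fin n × Fin n)).Nonempty :=
    ⟨(⟨0, by omega⟩, ⟨0, by omega⟩), Finset.mem_univ _⟩
  obtain ⟨c0, -, hc0min⟩ := Finset.exists_min_image Finset.univ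
    (fun c : Fin n × Fin n => (A c.1 c.2).factorization p) hne
  set a0 := (A c0.1 c0.2).factorization p with ha0
  have hmin : ∀ i j, a0 ≤ (A i j).factorization p := fun i j =>
    hc0min (i, j) (Finset.mem_univ _)
  -- max q-valuation among min-cells
  have hTne : (Finset.univ.filter
      (fun c : Fin n × Fin n => (A c.1 c.2).factorization p = a0)).Nonempty :=
    ⟨c0, by simp [ha0]⟩
  obtain ⟨c1, hmem, hmax'⟩ := Finset.exists_max_image _
    (fun c : Fin n × Fin n => (A c.1 c.2).factorization q) hTne
  obtain ⟨i0, j0⟩ := c1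
  have ha00 : (A i0 j0).factorization p = a0 := (Finset.mem_filter.mp hmem).2
  have hmax : ∀ i j, (A i j).factorization p = a0 →
      (A i j).factorization q ≤ (A i0 j0).factorization q := by
    intro i j h
    exact hmax' (i, j) (Finset.mem_filter.mpr ⟨Finset.mem_univ _, h⟩)
  -- clean row exists
  have hclean : ∃ i, ∀ j, (A i j).factorization p ≠ a0 := by
    by_contra hcon
    push_neg at hcon
    choose g hg using hcon
    have hcard : (Finset.univ : Finset (Fin n)).card ≤ (Finset.range (m + 1)).card := by
      apply Finset.card_le_card_of_injOn (fun i : Fin n => (A i (g i)).factorization q)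
      · intro i _
        rw [Finset.mem_coe, Finset.mem_range, Nat.lt_succ_iff, ← hbrow i]
        exact Finset.single_le_sum (f := fun j => (A i j).factorization q) (fun _ _ => Nat.zero_le _) (Finset.mem_univ (g i))
      · intro i _ i' _ h
        exact (hcell i (g i) i' (g i') (by rw [hg i, hg i']) h).1
    simp only [Finset.card_univ, Fintype.card_fin, Finset.card_range] at hcard
    omega
  obtain ⟨ic, hic⟩ := hclean
  have hS : p ^ (a0 + 1) ∣ S := by
    rw [← hrow ic]
    apply Finset.dvd_sum
    intro j _
    have h1 : a0 + 1 ≤ (A ic j).factorization p :=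
      lt_of_le_of_ne (hmin ic j) (Ne.symm (hic j))
    calc p ^ (a0 + 1) ∣ p ^ ((A ic j).factorization p) := pow_dvd_pow p h1
      _ ∣ A ic j := by
          conv_rhs => rw [hent ic j]
          exact dvd_mul_right _ _
  -- transpose facts
  set B : Fin n → Fin n → ℕ := fun i j => A j i with hB
  have hentB : ∀ i j, B i j = p ^ (B i j).factorization p * q ^ (B i j).factorization q :=
    fun i j => hent j i
  have hminB : ∀ i j, a0 ≤ (B i j).factorization p := fun i j => hmin j i
  have hrowB : ∀ i, ∑ j, B i j = S := fun i => hcol i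
  -- row-mate and column-mate of (i0, j0)
  obtain ⟨j1, hj1ne, hj1⟩ := row_key hp hq hpq hent hmin hrow hS ha00
  obtain ⟨i1, hi1ne, hi1⟩ := row_key hp hq hpq hentB hminB hrowB hS (i := j0) (j := i0) ha00
  have hi1' : (A i1 j0).factorization p = a0 := hi1
  set β0 := (A i0 j0).factorization q with hβ0
  set b1 := (A i0 j1).factorization q with hb1
  set b2 := (A i1 j0).factorization q with hb2
  have hb1le : b1 ≤ β0 := hmax i0 j1 hj1
  have hb2le : b2 ≤ β0 := hmax i1 j0 hi1'
  have hb1ne : b1 ≠ β0 := by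
    intro h
    exact hj1ne (hcell i0 j1 i0 j0 (by rw [hj1, ha00]) h).2
  have hb2ne : b2 ≠ β0 := by
    intro h
    exact hi1ne (hcell i1 j0 i0 j0 (by rw [hi1', ha00]) h).1
  have hb12 : b1 ≠ b2 := by
    intro h
    exact hi1ne ((hcell i0 j1 i1 j0 (by rw [hj1, hi1']) h).1).symm
  have hpair1 : β0 + b1 ≤ m := by
    have := pair_le (fun j => (A i0 j).factorization q) (Ne.symm hj1ne)
    rw [hbrow i0] at this
    exact this
  have hpair2 : β0 + b2 ≤ m := by
    have := pair_le (fun i => (A i j0).factorization q) (Ne.symm hi1ne)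
    rw [hbcol j0] at this
    exact this
  have hkey : β0 = 2 ∧ ((b1 = 1 ∧ b2 = 0) ∨ (b1 = 0 ∧ b2 = 1)) := by omega
  obtain ⟨hβ2, hcase⟩ := hkey
  rcases hcase with ⟨hb1v, hb2v⟩ | ⟨hb1v, hb2v⟩
  · -- column through (i0, j1)
    obtain ⟨i2, hi2ne, hi2⟩ := row_key hp hq hpq hentB hminB hrowB hS (i := j1) (j := i0) hj1
    have hi2' : (A i2 j1).factorization p = a0 := hi2
    set b3 := (A i2 j1).factorization q with hb3
    have h3le : b3 + b1 ≤ m := by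
      have := pair_le (fun i => (A i j1).factorization q) hi2ne
      rw [hbcol j1] at this
      exact this
    have h31 : b3 ≠ b1 := by
      intro h
      exact hi2ne (hcell i2 j1 i0 j1 (by rw [hi2', hj1]) h).1
    have h32 : b3 ≠ b2 := by
      intro h
      exact hj1ne (hcell i2 j1 i1 j0 (by rw [hi2', hi1']) h).2
    have h30 : b3 ≠ β0 := by
      intro h
      exact hj1ne (hcell i2 j1 i0 j0 (by rw [hi2', ha00]) h).2
    omega
  · -- row through (i1, j0)
    obtain ⟨j2, hj2ne, hj2⟩ := row_key hp hq hpq hent hmin hrow hS hi1'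
    set b4 := (A i1 j2).factorization q with hb4
    have h4le : b4 + b2 ≤ m := by
      have := pair_le (fun j => (A i1 j).factorization q) hj2ne
      rw [hbrow i1] at this
      exact this
    have h41 : b4 ≠ b2 := by
      intro h
      exact hj2ne (hcell i1 j2 i1 j0 (by rw [hj2, hi1']) h).2
    have h42 : b4 ≠ b1 := by
      intro h
      exact hi1ne (hcell i1 j2 i0 j1 (by rw [hj2, hj1]) h).1
    have h40 : b4 ≠ β0 := by
      intro h
      exact hi1ne (hcell i1 j2 i0 j0 (by rw [hj2, ha00]) h).1
    omega
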